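/- For an analytic map f(x) = -x + Σ_{j≥2} a_j x^j with stability constants W_j defined by f(f(x)) = x + Σ_{j≥3} W_j x^j, the following identity holds: W₄ = -(a₂/2)·W₃, where W₃ = -2a₂² - 2a₃. Equivalently, the coefficient of x⁴ in f(f(x)) is a₂³ + a₂a₃ = a₂(a₂² + a₃). -/

import Mathlib

open Filter Topology

private lemma analyticAt_deriv {f : ℝ → ℝ} {x : ℝ} (h : AnalyticAt ℝ f x) :
    AnalyticAt ℝ (deriv f) x := by
  obtain ⟨s, hsx, hs⟩ := h.exists_mem_nhds_analyticOnNhd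
  exact hs.deriv x (mem_of_mem_nhds hsx)

theorem stmt14 (f : ℝ → ℝ) (a2 a3 : ℝ) (hf : AnalyticAt ℝ f 0) (h0 : f 0 = 0)
    (h1 : deriv f 0 = -1)
    (h2 : iteratedDeriv 2 f 0 / 2 = a2) (h3 : iteratedDeriv 3 f 0 / 6 = a3) :
    iteratedDeriv 4 (f ∘ f) 0 / 24 = a2 ^ 3 + a2 * a3 ∧
    iteratedDeriv 4 (f ∘ f) 0 / 24 = -(a2 / 2) * (-2 * a2 ^ 2 - 2 * a3) := by
  set d1 := deriv f with hd1
  set d2 := deriv d1 with hd2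
  set d3 := deriv d2 with hd3
  -- eventual analyticity at x and at f x
  have hcont : Tendsto f (𝓝 0) (𝓝 0) := by
    have := hf.continuousAt.tendsto; rwa [h0] at this
  have hE : ∀ᶠ x in 𝓝 0, AnalyticAt ℝ f x ∧ AnalyticAt ℝ f (f x) :=
    hf.eventually_analyticAt.and (hcont.eventually hf.eventually_analyticAt)
  -- pointwise computations
  have key : ∀ x : ℝ, AnalyticAt ℝ f x → AnalyticAt ℝ f (f x) →
      (deriv (f ∘ f) x = d1 (f x) * d1 x ∧
       deriv (fun y => d1 (f y) * d1 y) x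
         = d2 (f x) * d1 x * d1 x + d1 (f x) * d2 x ∧
       deriv (fun y => d2 (f y) * d1 y * d1 y + d1 (f y) * d2 y) x
         = d3 (f x) * d1 x * d1 x * d1 x + 3 * (d2 (f x) * d1 x * d2 x)
           + d1 (f x) * d3 x) := by
    intro x hA hB
    have Df : DifferentiableAt ℝ f x := hA.differentiableAt
    have Dd1 : DifferentiableAt ℝ d1 x := (analyticAt_deriv hA).differentiableAt
    have Dd2 : DifferentiableAt ℝ d2 x :=
      (analyticAt_deriv (analyticAt_deriv hA)).differentiableAt
    have Dd3 : DifferentiableAt ℝ d3 x :=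
      (analyticAt_deriv (analyticAt_deriv (analyticAt_deriv hA))).differentiableAt
    have Df' : DifferentiableAt ℝ f (f x) := hB.differentiableAt
    have Dd1' : DifferentiableAt ℝ d1 (f x) := (analyticAt_deriv hB).differentiableAt
    have Dd2' : DifferentiableAt ℝ d2 (f x) :=
      (analyticAt_deriv (analyticAt_deriv hB)).differentiableAt
    have Dc1 : DifferentiableAt ℝ (fun y => f (f y)) x := Df'.comp x Df
    have Dc2 : DifferentiableAt ℝ (fun y => d1 (f y)) x := Dd1'.comp x Df
    have Dc3 : DifferentiableAt ℝ (fun y => d2 (f y)) x := Dd2'.comp x Df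
    have e1 : deriv (fun y => f (f y)) x = d1 (f x) * d1 x := deriv_comp x Df' Df
    have e2 : deriv (fun y => d1 (f y)) x = d2 (f x) * d1 x := deriv_comp x Dd1' Df
    have e3 : deriv (fun y => d2 (f y)) x = d3 (f x) * d1 x := deriv_comp x Dd2' Df
    refine ⟨e1, ?_, ?_⟩
    · rw [deriv_fun_mul Dc2 Dd1, e2]
    · rw [deriv_fun_add ((Dc3.fun_mul Dd1).fun_mul Dd1) (Dc2.fun_mul Dd2),
        deriv_fun_mul (Dc3.fun_mul Dd1) Dd1, deriv_fun_mul Dc3 Dd1, e3,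
        deriv_fun_mul Dc2 Dd2, e2]
      ring
  -- eventual equalities
  have l1 : deriv (f ∘ f) =ᶠ[𝓝 0] fun y => d1 (f y) * d1 y :=
    hE.mono fun x ⟨hA, hB⟩ => (key x hA hB).1
  have l2 : deriv (fun y => d1 (f y) * d1 y) =ᶠ[𝓝 0]
      fun y => d2 (f y) * d1 y * d1 y + d1 (f y) * d2 y :=
    hE.mono fun x ⟨hA, hB⟩ => (key x hA hB).2.1
  have l3 : deriv (fun y => d2 (f y) * d1 y * d1 y + d1 (f y) * d2 y) =ᶠ[𝓝 0]
      fun y => d3 (f y) * d1 y * d1 y * d1 y + 3 * (d2 (f y) * d1 y * d2 y)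
        + d1 (f y) * d3 y :=
    hE.mono fun x ⟨hA, hB⟩ => (key x hA hB).2.2
  have L3 : iteratedDeriv 3 (f ∘ f) =ᶠ[𝓝 0]
      fun y => d3 (f y) * d1 y * d1 y * d1 y + 3 * (d2 (f y) * d1 y * d2 y)
        + d1 (f y) * d3 y := by
    have : iteratedDeriv 3 (f ∘ f) = deriv (deriv (deriv (f ∘ f))) := by
      simp [iteratedDeriv_succ, iteratedDeriv_zero]
    rw [this]
    exact (l1.deriv.trans l2).deriv.trans l3
  -- final derivative at 0
  have hA0 : AnalyticAt ℝ f 0 := hf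
  have hB0 : AnalyticAt ℝ f (f 0) := by rwa [h0]
  have Df : DifferentiableAt ℝ f 0 := hA0.differentiableAt
  have Dd1 : DifferentiableAt ℝ d1 0 := (analyticAt_deriv hA0).differentiableAt
  have Dd2 : DifferentiableAt ℝ d2 0 :=
    (analyticAt_deriv (analyticAt_deriv hA0)).differentiableAt
  have Dd3 : DifferentiableAt ℝ d3 0 :=
    (analyticAt_deriv (analyticAt_deriv (analyticAt_deriv hA0))).differentiableAt
  have Dd4 : DifferentiableAt ℝ (deriv d3) 0 :=
    (analyticAt_deriv (analyticAt_deriv (analyticAt_deriv (analyticAt_deriv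
      hA0)))).differentiableAt
  have Dd1' : DifferentiableAt ℝ d1 (f 0) := by rwa [h0]
  have Dd2' : DifferentiableAt ℝ d2 (f 0) := by rwa [h0]
  have Dd3' : DifferentiableAt ℝ d3 (f 0) := by rwa [h0]
  have Dc1 : DifferentiableAt ℝ (fun y => d1 (f y)) 0 := Dd1'.comp 0 Df
  have Dc2 : DifferentiableAt ℝ (fun y => d2 (f y)) 0 := Dd2'.comp 0 Df
  have Dc3 : DifferentiableAt ℝ (fun y => d3 (f y)) 0 := Dd3'.comp 0 Df
  have e1 : deriv (fun y => d1 (f y)) 0 = d2 (f 0) * d1 0 := deriv_comp 0 Dd1' Df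
  have e2 : deriv (fun y => d2 (f y)) 0 = d3 (f 0) * d1 0 := deriv_comp 0 Dd2' Df
  have e3 : deriv (fun y => d3 (f y)) 0 = deriv d3 (f 0) * d1 0 := deriv_comp 0 Dd3' Df
  have final : iteratedDeriv 4 (f ∘ f) 0
      = deriv (fun y => d3 (f y) * d1 y * d1 y * d1 y + 3 * (d2 (f y) * d1 y * d2 y)
        + d1 (f y) * d3 y) 0 := by
    rw [show iteratedDeriv 4 (f ∘ f) = deriv (iteratedDeriv 3 (f ∘ f)) from
      iteratedDeriv_succ]
    exact L3.deriv.eq_of_nhds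
  rw [final]
  have DT1 : DifferentiableAt ℝ (fun y => d3 (f y) * d1 y * d1 y * d1 y) 0 :=
    ((Dc3.mul Dd1).mul Dd1).mul Dd1
  have DT2 : DifferentiableAt ℝ (fun y => 3 * (d2 (f y) * d1 y * d2 y)) 0 :=
    (((Dc2.mul Dd1).mul Dd2).const_mul 3)
  have DT3 : DifferentiableAt ℝ (fun y => d1 (f y) * d3 y) 0 := Dc1.mul Dd3
  rw [deriv_fun_add (DT1.fun_add DT2) DT3, deriv_fun_add DT1 DT2,
    deriv_fun_mul ((Dc3.fun_mul Dd1).fun_mul Dd1) Dd1, deriv_fun_mul (Dc3.fun_mul Dd1) Dd1,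
    deriv_fun_mul Dc3 Dd1, e3,
    deriv_const_mul 3 ((Dc2.fun_mul Dd1).fun_mul Dd2), deriv_fun_mul (Dc2.fun_mul Dd1) Dd2,
    deriv_fun_mul Dc2 Dd1, e2,
    deriv_fun_mul Dc1 Dd3, e1]
  -- now plug in values
  have v2 : d2 0 = 2 * a2 := by
    rw [← h2]; simp [hd2, hd1, iteratedDeriv_succ, iteratedDeriv_zero]; ring
  have v3 : d3 0 = 6 * a3 := by
    rw [← h3]; simp [hd3, hd2, hd1, iteratedDeriv_succ, iteratedDeriv_zero]; ring
  rw [← hd2, ← hd3, h0, h1, v2, v3]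
  constructor <;> ring
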